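/- For all real μ > 0 and all real y, |1/(1 - μ(e^{iy}-1))|² ≤ 1/(1 + (4/π²)·μ(μ+1)·y²) whenever |y| ≤ π. -/

import Mathlib

theorem stmt_8 (μ y : ℝ) (hμ : 0 < μ) (hy : |y| ≤ Real.pi) :
    ‖(1 / (1 - (μ : ℂ) * (Complex.exp (Complex.I * y) - 1)))‖ ^ 2
      ≤ 1 / (1 + 4 / Real.pi ^ 2 * (μ * (μ + 1)) * y ^ 2) := by
  have hpi := Real.pi_pos
  have hA : ‖(1 - (μ : ℂ) * (Complex.exp (Complex.I * y) - 1))‖ ^ 2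
      = 1 + 2 * μ * (μ + 1) * (1 - Real.cos y) := by
    rw [mul_comm Complex.I (y : ℂ), Complex.exp_mul_I, Complex.sq_norm,
      Complex.normSq_apply]
    have hs := Real.sin_sq_add_cos_sq y
    simp [Complex.cos_ofReal_re, Complex.sin_ofReal_re]
    linear_combination (μ^2) * hs
  have hcos : Real.cos y ≤ 1 - 2 / Real.pi ^ 2 * y ^ 2 :=
    Real.cos_le_one_sub_mul_cos_sq hy
  have hμμ : 0 < μ * (μ + 1) := by nlinarith
  have hB : 0 < 1 + 4 / Real.pi ^ 2 * (μ * (μ + 1)) * y ^ 2 := by positivity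
  have hkey : 1 + 4 / Real.pi ^ 2 * (μ * (μ + 1)) * y ^ 2
      ≤ 1 + 2 * μ * (μ + 1) * (1 - Real.cos y) := by
    have h2 : 2 / Real.pi ^ 2 * y ^ 2 ≤ 1 - Real.cos y := by linarith
    have h3 := mul_le_mul_of_nonneg_left h2 (by positivity : (0:ℝ) ≤ 2 * (μ * (μ + 1)))
    have h4 : 1 + 4 / Real.pi ^ 2 * (μ * (μ + 1)) * y ^ 2
        = 1 + 2 * (μ * (μ + 1)) * (2 / Real.pi ^ 2 * y ^ 2) := by ring
    have h5 : 1 + 2 * μ * (μ + 1) * (1 - Real.cos y)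
        = 1 + 2 * (μ * (μ + 1)) * (1 - Real.cos y) := by ring
    rw [h4, h5]
    linarith [h3]
  rw [norm_div, div_pow, norm_one, one_pow]
  rw [hA]
  apply div_le_div_of_nonneg_left one_pos.le hB
  exact hkey
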